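/- On ℝ⁵ with coordinates (x,y,z,a,b), let Z₁ = ∂x + a∂z, Z₂ = ∂y + b∂z, Z₃ = −3∂b, Z₄ = ∂a, and define the landing-mode control fields Y₁ = Z₃, Y₂ = Z₄, Y₃ = 3abZ₁ − 3(1+a²)Z₂ + Z₃, Y₄ = (1+b²)Z₁ − abZ₂ + Z₄. Then the family {Y₁, Y₂, Y₃, Y₄} is bracket generating at every point of ℝ⁵: explicitly, [Y₁, Y₃] = −9a∂x + 9∂z and [Y₂, [Y₁, Y₃]] = −9∂x, and at every point p ∈ ℝ⁵ the five vectors Y₁(p), Y₂(p), Y₃(p), [Y₁,Y₃](p), [Y₂,[Y₁,Y₃]](p) span ℝ⁵. -/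

import Mathlib

noncomputable section

/-- Points of `ℝ⁵` with coordinates `(x,y,z,a,b) = (p 0, p 1, p 2, p 3, p 4)`. -/
abbrev Pt := Fin 5 → ℝ

/-- Vector fields on `ℝ⁵`. -/
abbrev VF := Pt → Pt

/-- Lie bracket of vector fields: `[V,W](p) = (DW)_p(V(p)) − (DV)_p(W(p))`. -/
def lieBracket (V W : VF) : VF := fun p => fderiv ℝ W p (V p) - fderiv ℝ V p (W p)

/-- `Z₁ = ∂x + a∂z`. -/
def Z1 : VF := fun p => ![1, 0, p 3, 0, 0]
/-- `Z₂ = ∂y + b∂z`. -/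
def Z2 : VF := fun p => ![0, 1, p 4, 0, 0]
/-- `Z₃ = −3∂b`. -/
def Z3 : VF := fun _ => ![0, 0, 0, 0, -3]
/-- `Z₄ = ∂a`. -/
def Z4 : VF := fun _ => ![0, 0, 0, 1, 0]

/-- The landing-mode control fields. -/
def Y1 : VF := Z3
def Y2 : VF := Z4
def Y3 : VF := fun p => (3 * p 3 * p 4) • Z1 p + (-3 * (1 + p 3 ^ 2)) • Z2 p + Z3 p
def Y4 : VF := fun p => (1 + p 4 ^ 2) • Z1 p + (-(p 3 * p 4)) • Z2 p + Z4 p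

open ContinuousLinearMap in
def D3 (p : Pt) : Pt →L[ℝ] Pt :=
  ContinuousLinearMap.pi
    ![(3 * p 4) • proj 3 + (3 * p 3) • proj 4, (-6 * p 3) • proj 3,
      (-3 : ℝ) • proj 4, 0, 0]

lemma hproj (k : Fin 5) (p : Pt) : HasFDerivAt (fun q : Pt => q k)
    (ContinuousLinearMap.proj k : Pt →L[ℝ] ℝ) p := hasFDerivAt_apply k p

lemma hY3 (p : Pt) : HasFDerivAt Y3 (D3 p) p := by
  have h3 := hproj 3 p
  have h4 := hproj 4 p
  have key : HasFDerivAt (fun (q : Pt) (i : Fin 5) =>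
      (![fun q : Pt => 3 * q 3 * q 4, fun q => -3 * (1 + q 3 ^ 2), fun q => -3 * q 4,
        fun _ => 0, fun _ => -3] : Fin 5 → Pt → ℝ) i q) (D3 p) p := by
    apply hasFDerivAt_pi.2
    intro i
    fin_cases i
    · show HasFDerivAt (fun q : Pt => 3 * q 3 * q 4) _ p
      simp only [D3]
      have := (h3.const_mul 3).mul h4
      refine this.congr_fderiv ?_
      ext v
      simp
      ring
    · show HasFDerivAt (fun q : Pt => -3 * (1 + q 3 ^ 2)) _ p
      simp only [D3]
      have := (((h3.mul h3).const_mul 3).const_add 3).const_mul (-1)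
      refine (this.congr_of_eventuallyEq (Filter.Eventually.of_forall fun q => ?_)).congr_fderiv ?_
      · simp only [Pi.mul_apply]; ring
      · ext v; simp; ring
    · show HasFDerivAt (fun q : Pt => -3 * q 4) _ p
      simp only [D3]
      refine (h4.const_mul (-3)).congr_fderiv ?_
      ext v; simp
    · show HasFDerivAt (fun _ : Pt => (0 : ℝ)) _ p
      simp only [D3]
      exact hasFDerivAt_const 0 p
    · show HasFDerivAt (fun _ : Pt => (-3 : ℝ)) _ p
      simp only [D3]
      exact hasFDerivAt_const (-3) p
  convert key using 2 with q
  funext i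
  fin_cases i <;> simp [Y3, Z1, Z2, Z3] <;> ring

open ContinuousLinearMap in
def DB : Pt →L[ℝ] Pt :=
  ContinuousLinearMap.pi ![(-9 : ℝ) • proj 3, 0, 0, 0, 0]

lemma hB (p : Pt) : HasFDerivAt (fun p : Pt => ![-9 * p 3, 0, 9, 0, 0]) DB p := by
  have h3 := hproj 3 p
  have key : HasFDerivAt (fun (q : Pt) (i : Fin 5) =>
      (![fun q : Pt => -9 * q 3, fun _ => 0, fun _ => 9, fun _ => 0, fun _ => 0] :
        Fin 5 → Pt → ℝ) i q) DB p := by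
    apply hasFDerivAt_pi.2
    intro i
    fin_cases i
    · show HasFDerivAt (fun q : Pt => -9 * q 3) _ p
      exact h3.const_mul (-9)
    · exact hasFDerivAt_const 0 p
    · exact hasFDerivAt_const 9 p
    · exact hasFDerivAt_const 0 p
    · exact hasFDerivAt_const 0 p
  convert key using 2 with q
  funext i
  fin_cases i <;> simp [Matrix.vecHead, Matrix.vecTail]

lemma bracket13 : lieBracket Y1 Y3 = (fun p => ![-9 * p 3, 0, 9, 0, 0]) := by
  funext p
  have hc : fderiv ℝ Y1 p = 0 := by
    have : HasFDerivAt Y1 (0 : Pt →L[ℝ] Pt) p := hasFDerivAt_const _ p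
    exact this.fderiv
  rw [lieBracket, hc, (hY3 p).fderiv]
  funext i
  fin_cases i <;>
    simp [D3, Y1, Z3, ContinuousLinearMap.pi_apply, ContinuousLinearMap.proj] <;> ring

lemma bracket213 :
    lieBracket Y2 (lieBracket Y1 Y3) = (fun _ => ![-9, 0, 0, 0, 0]) := by
  funext p
  have hc : fderiv ℝ Y2 p = 0 := by
    have : HasFDerivAt Y2 (0 : Pt →L[ℝ] Pt) p := hasFDerivAt_const _ p
    exact this.fderiv
  rw [bracket13, lieBracket, hc, (hB p).fderiv]
  funext i
  fin_cases i <;>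
    simp [DB, Y2, Z4, ContinuousLinearMap.pi_apply, ContinuousLinearMap.proj]

lemma span_aux (p : Pt) :
    Submodule.span ℝ
      ({Y1 p, Y2 p, Y3 p, ![-9 * p 3, 0, 9, 0, 0], ![-9, 0, 0, 0, 0]} : Set Pt) = ⊤ := by
  set S := Submodule.span ℝ
      ({Y1 p, Y2 p, Y3 p, ![-9 * p 3, 0, 9, 0, 0], ![-9, 0, 0, 0, 0]} : Set Pt) with hS
  have m1 : Y1 p ∈ S := Submodule.subset_span (by simp)
  have m2 : Y2 p ∈ S := Submodule.subset_span (by simp)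
  have m3 : Y3 p ∈ S := Submodule.subset_span (by simp)
  have m4 : (![-9 * p 3, 0, 9, 0, 0] : Pt) ∈ S := Submodule.subset_span (by simp)
  have m5 : (![-9, 0, 0, 0, 0] : Pt) ∈ S := Submodule.subset_span (by simp)
  have e0 : (![1, 0, 0, 0, 0] : Pt) ∈ S := by
    have h : (![1, 0, 0, 0, 0] : Pt) = (-9 : ℝ)⁻¹ • (![-9, 0, 0, 0, 0] : Pt) := by
      funext i; fin_cases i <;> simp <;> norm_num
    rw [h]; exact S.smul_mem _ m5
  have e4 : (![0, 0, 0, 0, 1] : Pt) ∈ S := by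
    have h : (![0, 0, 0, 0, 1] : Pt) = (-3 : ℝ)⁻¹ • Y1 p := by
      funext i; fin_cases i <;> simp [Y1, Z3] <;> norm_num
    rw [h]; exact S.smul_mem _ m1
  have e3 : (![0, 0, 0, 1, 0] : Pt) ∈ S := by
    have h : (![0, 0, 0, 1, 0] : Pt) = Y2 p := by
      funext i; fin_cases i <;> simp [Y2, Z4]
    rw [h]; exact m2
  have e2 : (![0, 0, 1, 0, 0] : Pt) ∈ S := by
    have h : (![0, 0, 1, 0, 0] : Pt) =
        (9 : ℝ)⁻¹ • ((![-9 * p 3, 0, 9, 0, 0] : Pt) + (9 * p 3) • (![1, 0, 0, 0, 0] : Pt)) := by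
      funext i; fin_cases i <;> simp <;> norm_num
    rw [h]; exact S.smul_mem _ (S.add_mem m4 (S.smul_mem _ e0))
  have hne : (-3 * (1 + p 3 ^ 2)) ≠ 0 := by nlinarith [sq_nonneg (p 3)]
  have e1 : (![0, 1, 0, 0, 0] : Pt) ∈ S := by
    have h : (-3 * (1 + p 3 ^ 2)) • (![0, 1, 0, 0, 0] : Pt)
        = Y3 p + (-(3 * p 3 * p 4)) • (![1, 0, 0, 0, 0] : Pt)
          + (3 * p 4) • (![0, 0, 1, 0, 0] : Pt) + (3 : ℝ) • (![0, 0, 0, 0, 1] : Pt) := by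
      funext i
      fin_cases i <;> simp [Y3, Z1, Z2, Z3] <;> ring
    have h2 : (![0, 1, 0, 0, 0] : Pt) = (-3 * (1 + p 3 ^ 2))⁻¹
        • (Y3 p + (-(3 * p 3 * p 4)) • (![1, 0, 0, 0, 0] : Pt)
          + (3 * p 4) • (![0, 0, 1, 0, 0] : Pt) + (3 : ℝ) • (![0, 0, 0, 0, 1] : Pt)) := by
      rw [← h, inv_smul_smul₀ hne]
    rw [h2]
    exact S.smul_mem _ (S.add_mem (S.add_mem (S.add_mem m3 (S.smul_mem _ e0))
      (S.smul_mem _ e2)) (S.smul_mem _ e4))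
  rw [eq_top_iff, ← (Pi.basisFun ℝ (Fin 5)).span_eq, Submodule.span_le]
  rintro _ ⟨i, rfl⟩
  rw [Pi.basisFun_apply]
  fin_cases i
  · have : (Pi.single (0 : Fin 5) 1 : Pt) = ![1, 0, 0, 0, 0] := by
      funext j; fin_cases j <;> simp [Pi.single_apply]
    show (Pi.single (0 : Fin 5) 1 : Pt) ∈ (S : Set Pt)
    rw [this]; exact e0
  · have : (Pi.single (1 : Fin 5) 1 : Pt) = ![0, 1, 0, 0, 0] := by
      funext j; fin_cases j <;> simp [Pi.single_apply]
    show (Pi.single (1 : Fin 5) 1 : Pt) ∈ (S : Set Pt)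
    rw [this]; exact e1
  · have : (Pi.single (2 : Fin 5) 1 : Pt) = ![0, 0, 1, 0, 0] := by
      funext j; fin_cases j <;> simp [Pi.single_apply]
    show (Pi.single (2 : Fin 5) 1 : Pt) ∈ (S : Set Pt)
    rw [this]; exact e2
  · have : (Pi.single (3 : Fin 5) 1 : Pt) = ![0, 0, 0, 1, 0] := by
      funext j; fin_cases j <;> simp [Pi.single_apply]
    show (Pi.single (3 : Fin 5) 1 : Pt) ∈ (S : Set Pt)
    rw [this]; exact e3
  · have : (Pi.single (4 : Fin 5) 1 : Pt) = ![0, 0, 0, 0, 1] := by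
      funext j; fin_cases j <;> simp [Pi.single_apply]
    show (Pi.single (4 : Fin 5) 1 : Pt) ∈ (S : Set Pt)
    rw [this]; exact e4


/-- The landing-mode control fields `Y₁ = Z₃`, `Y₂ = Z₄`, `Y₃ = 3abZ₁ − 3(1+a²)Z₂ + Z₃`,
`Y₄ = (1+b²)Z₁ − abZ₂ + Z₄` are bracket generating at every point of `ℝ⁵`:
`[Y₁,Y₃] = −9a∂x + 9∂z`, `[Y₂,[Y₁,Y₃]] = −9∂x`, and at every point the vectors
`Y₁, Y₂, Y₃, [Y₁,Y₃], [Y₂,[Y₁,Y₃]]` span `ℝ⁵`. -/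
theorem landing_mode_bracket_generating :
    lieBracket Y1 Y3 = (fun p => ![-9 * p 3, 0, 9, 0, 0]) ∧
    lieBracket Y2 (lieBracket Y1 Y3) = (fun _ => ![-9, 0, 0, 0, 0]) ∧
    (∀ p : Pt,
      Submodule.span ℝ
        ({Y1 p, Y2 p, Y3 p, lieBracket Y1 Y3 p, lieBracket Y2 (lieBracket Y1 Y3) p} :
          Set (Fin 5 → ℝ)) = ⊤) := by
  refine ⟨bracket13, bracket213, fun p => ?_⟩
  rw [bracket213, bracket13]
  exact span_aux p
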